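/- Let n ≥ 3 and let G be an n-vertex Hamiltonian graph with no two cycles of the same length, obtained from a cycle C_n by adding k chords. Call a pair of chords e, e' crossing if C_n together with e and e' forms a subdivision of K_4 (equivalently, their endpoints interleave along the cycle), and non-crossing otherwise. If c is the number of crossing pairs of chords, then 2c + (C(k,2) - c) ≤ n, i.e., C(k,2) + c ≤ n. -/

import Mathlib

/-- The cycle `C_n` on vertex set `Fin n`, where label `i` represents the integer `i + 1`;
edges join consecutive integers mod `n` (i.e. `{i, i+1}` for `1 ≤ i ≤ n - 1` and `{n, 1}`). -/
def cycG (n : ℕ) : SimpleGraph (Fin n) :=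
  SimpleGraph.fromRel (fun i j => (i.val + 1) % n = j.val)

/-- The graph `G_n(S)`: the cycle `C_n` together with a chord `{1, a}` for each `a ∈ S`
(vertex label `i` represents the integer `i + 1`, so the integer vertex `1` is label `0`
and the integer vertex `a` is label `a - 1`). -/
def GnS (n : ℕ) (S : Finset ℕ) : SimpleGraph (Fin n) :=
  SimpleGraph.fromRel (fun i j => (i.val + 1) % n = j.val ∨ (i.val = 0 ∧ j.val + 1 ∈ S))

/-- A graph on a finite vertex type is Hamiltonian if it has a cycle through all vertices,
i.e. a cycle whose length equals the number of vertices. -/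
def IsHamiltonianGraph {V : Type*} [Fintype V] (G : SimpleGraph V) : Prop :=
  ∃ (u : V) (p : G.Walk u u), p.IsCycle ∧ p.length = Fintype.card V

/-- No two cycles of `G` have the same length: any two cycles with equal length are the same
cycle, i.e. have the same edge set. -/
def NoRepeatedCycleLength {V : Type*} (G : SimpleGraph V) : Prop :=
  ∀ (u v : V) (p : G.Walk u u) (q : G.Walk v v),
    p.IsCycle → q.IsCycle → p.length = q.length →
      {e | e ∈ p.edges} = {e | e ∈ q.edges}

/-- Two chords `e = {a, b}` and `f = {c, d}` of the cycle `C_n` are crossing if their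
endpoints interleave in the cyclic order of `C_n`; with endpoints listed so that `a < b`
and `c < d` in the linear order on labels, this means `a < c < b < d` (up to swapping the
roles of `e` and `f`). -/
def Crossing {n : ℕ} (e f : Sym2 (Fin n)) : Prop :=
  ∃ a b c d : Fin n,
    ((e = s(a, b) ∧ f = s(c, d)) ∨ (e = s(c, d) ∧ f = s(a, b))) ∧
      a.val < c.val ∧ c.val < b.val ∧ b.val < d.val

namespace Scratch
open SimpleGraph

variable {n : ℕ}

def vtx (hn : 0 < n) (m : ℕ) : Fin n := ⟨m % n, Nat.mod_lt _ hn⟩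

variable (hn : 0 < n)

lemma vtx_val {m : ℕ} (hm : m < n) : (vtx hn m).val = m := Nat.mod_eq_of_lt hm

lemma vtx_eq_self (z : Fin n) : vtx hn z.val = z := Fin.ext (vtx_val hn z.2)

lemma vtx_inj {i j : ℕ} (hi : i < n) (hj : j < n) (h : vtx hn i = vtx hn j) : i = j := by
  have := congrArg Fin.val h
  rwa [vtx_val hn hi, vtx_val hn hj] at this

lemma cyc_adj_step {i : ℕ} (h : i + 1 < n) : (cycG n).Adj (vtx hn i) (vtx hn (i+1)) := by
  rw [cycG, SimpleGraph.fromRel_adj]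
  constructor
  · intro hh
    have := vtx_inj hn (by omega) h hh
    omega
  · left
    rw [vtx_val hn (by omega), vtx_val hn h, Nat.mod_eq_of_lt h]

lemma cyc_adj_wrap (h2 : 2 ≤ n) : (cycG n).Adj (vtx hn (n-1)) (vtx hn 0) := by
  rw [cycG, SimpleGraph.fromRel_adj]
  constructor
  · intro hh
    have := vtx_inj hn (by omega) (by omega) hh
    omega
  · left
    rw [vtx_val hn (by omega), vtx_val hn (by omega)]
    have : n - 1 + 1 = n := by omega
    rw [this, Nat.mod_self]

lemma step_mem_cycE {i : ℕ} (h : i + 1 < n) :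
    s(vtx hn i, vtx hn (i+1)) ∈ (cycG n).edgeSet := cyc_adj_step hn h

lemma wrap_mem_cycE (h2 : 2 ≤ n) :
    s(vtx hn (n-1), vtx hn 0) ∈ (cycG n).edgeSet := cyc_adj_wrap hn h2

def arc (hn : 0 < n) : (a d : ℕ) → (h : a + d < n) → (cycG n).Walk (vtx hn a) (vtx hn (a+d))
  | _, 0, _ => Walk.nil
  | a, d+1, h =>
    (Walk.cons (cyc_adj_step hn (by omega)) (arc hn (a+1) d (by omega))).copy rfl
      (by congr 1; omega)

lemma arc_length (a d : ℕ) (h : a + d < n) : (arc hn a d h).length = d := by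
  induction d generalizing a with
  | zero => rfl
  | succ d ih => simp [arc, ih]

lemma arc_support (a d : ℕ) (h : a + d < n) :
    (arc hn a d h).support = (List.range (d+1)).map (fun i => vtx hn (a+i)) := by
  induction d generalizing a with
  | zero => rw [show List.range 1 = [0] from rfl]; rfl
  | succ d ih =>
    rw [List.range_succ_eq_map]
    simp only [arc, Walk.support_copy, Walk.support_cons, ih (a+1) (by omega), List.map_cons,
      List.map_map]
    congr 1
    apply List.map_congr_left
    intro i _
    simp only [Function.comp, Nat.succ_eq_add_one]
    have h1 : a + (i+1) = a+1+i := by omega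
    rw [h1]

lemma arc_edges (a d : ℕ) (h : a + d < n) :
    (arc hn a d h).edges = (List.range d).map (fun i => s(vtx hn (a+i), vtx hn (a+i+1))) := by
  induction d generalizing a with
  | zero => simp [arc, List.range_zero]
  | succ d ih =>
    rw [List.range_succ_eq_map]
    simp only [arc, Walk.edges_copy, Walk.edges_cons, ih (a+1) (by omega), List.map_cons,
      List.map_map]
    congr 1
    apply List.map_congr_left
    intro i _
    simp only [Function.comp, Nat.succ_eq_add_one]
    have h1 : a + (i+1) = a+1+i := by omega
    rw [h1]


lemma step_sym2_inj {i j : ℕ} (hi : i + 1 < n) (hj : j + 1 < n)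
    (h : s(vtx hn i, vtx hn (i+1)) = s(vtx hn j, vtx hn (j+1))) : i = j := by
  rw [Sym2.eq_iff] at h
  rcases h with ⟨h1, h2⟩ | ⟨h1, h2⟩
  · exact vtx_inj hn (by omega) (by omega) h1
  · have := vtx_inj hn (by omega) (by omega) h1
    have := vtx_inj hn (by omega) (by omega) h2
    omega

lemma mem_arc_support_iff {a d : ℕ} {h : a + d < n} {z : Fin n} :
    z ∈ (arc hn a d h).support ↔ a ≤ z.val ∧ z.val ≤ a + d := by
  rw [arc_support, List.mem_map]
  constructor
  · rintro ⟨i, hi, rfl⟩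
    rw [List.mem_range] at hi
    rw [vtx_val hn (by omega)]
    omega
  · rintro ⟨h1, h2⟩
    refine ⟨z.val - a, ?_, ?_⟩
    · rw [List.mem_range]; omega
    · rw [show a + (z.val - a) = z.val by omega, vtx_eq_self]

lemma arc_support_nodup {a d : ℕ} {h : a + d < n} : (arc hn a d h).support.Nodup := by
  rw [arc_support]
  refine List.Nodup.map_on ?_ (List.nodup_range)
  intro x hx y hy hxy
  rw [List.mem_range] at hx hy
  have := vtx_inj hn (by omega) (by omega) hxy
  omega

lemma mem_arc_edges_iff {a d : ℕ} {h : a + d < n} {g : Sym2 (Fin n)} :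
    g ∈ (arc hn a d h).edges ↔ ∃ i, a ≤ i ∧ i + 1 ≤ a + d ∧ g = s(vtx hn i, vtx hn (i+1)) := by
  rw [arc_edges, List.mem_map]
  constructor
  · rintro ⟨i, hi, rfl⟩
    rw [List.mem_range] at hi
    exact ⟨a + i, by omega, by omega, by rw [show a + i + 1 = a + i + 1 from rfl]⟩
  · rintro ⟨i, h1, h2, rfl⟩
    refine ⟨i - a, ?_, ?_⟩
    · rw [List.mem_range]; omega
    · rw [show a + (i - a) = i by omega]

lemma arc_edges_nodup {a d : ℕ} {h : a + d < n} : (arc hn a d h).edges.Nodup := by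
  rw [arc_edges]
  refine List.Nodup.map_on ?_ (List.nodup_range)
  intro x hx y hy hxy
  rw [List.mem_range] at hx hy
  have := step_sym2_inj hn (by omega) (by omega) hxy
  omega

section Mid
variable {G : SimpleGraph (Fin n)}

lemma midwalk (hsub : cycG n ≤ G) (x y : ℕ) (hxy : x ≤ y) (hy : y < n) (m1 m2 : Fin n)
    (hm : (m1 = vtx hn x ∧ m2 = vtx hn y) ∨ (m1 = vtx hn y ∧ m2 = vtx hn x)) :
    ∃ M : G.Walk m1 m2, M.length = y - x ∧ M.support.Nodup ∧
      (∀ z ∈ M.support, x ≤ z.val ∧ z.val ≤ y) ∧ M.edges.Nodup ∧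
      (∀ g ∈ M.edges, ∃ i, x ≤ i ∧ i + 1 ≤ y ∧ g = s(vtx hn i, vtx hn (i+1))) ∧
      (∀ i, x ≤ i → i + 1 ≤ y → s(vtx hn i, vtx hn (i+1)) ∈ M.edges) := by
  have harc : x + (y - x) < n := by omega
  have hcast : vtx hn (x + (y - x)) = vtx hn y := by congr 1; omega
  set A : (cycG n).Walk (vtx hn x) (vtx hn y) := (arc hn x (y-x) harc).copy rfl hcast with hA
  have hAe : A.edges = (arc hn x (y-x) harc).edges := Walk.edges_copy _ _ _
  have hAs : A.support = (arc hn x (y-x) harc).support := Walk.support_copy _ _ _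
  have hAedge : ∀ g ∈ A.edges, g ∈ G.edgeSet := by
    intro g hg
    rw [hAe, mem_arc_edges_iff hn] at hg
    obtain ⟨i, h1, h2, rfl⟩ := hg
    exact (SimpleGraph.edgeSet_subset_edgeSet.2 hsub) (step_mem_cycE hn (by omega))
  set B : G.Walk (vtx hn x) (vtx hn y) := A.transfer G hAedge with hB
  have hBe : B.edges = A.edges := Walk.edges_transfer _ _
  have hBs : B.support = A.support := Walk.support_transfer _ _
  have hBl : B.length = y - x := by
    rw [hB, Walk.length_transfer, Walk.length_copy, arc_length]
  have key : ∀ (M : G.Walk m1 m2), M.edges.Perm B.edges → M.support.Perm B.support →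
      M.length = B.length →
      M.length = y - x ∧ M.support.Nodup ∧
      (∀ z ∈ M.support, x ≤ z.val ∧ z.val ≤ y) ∧ M.edges.Nodup ∧
      (∀ g ∈ M.edges, ∃ i, x ≤ i ∧ i + 1 ≤ y ∧ g = s(vtx hn i, vtx hn (i+1))) ∧
      (∀ i, x ≤ i → i + 1 ≤ y → s(vtx hn i, vtx hn (i+1)) ∈ M.edges) := by
    intro M hMe hMs hMl
    refine ⟨by rw [hMl, hBl], ?_, ?_, ?_, ?_, ?_⟩
    · exact (hMs.nodup_iff).2 (by rw [hBs, hAs]; exact arc_support_nodup hn)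
    · intro z hz
      have := hMs.mem_iff.1 hz
      rw [hBs, hAs, mem_arc_support_iff hn] at this
      omega
    · exact (hMe.nodup_iff).2 (by rw [hBe, hAe]; exact arc_edges_nodup hn)
    · intro g hg
      have := hMe.mem_iff.1 hg
      rw [hBe, hAe, mem_arc_edges_iff hn] at this
      obtain ⟨i, h1, h2, rfl⟩ := this
      exact ⟨i, h1, by omega, rfl⟩
    · intro i h1 h2
      apply hMe.mem_iff.2
      rw [hBe, hAe, mem_arc_edges_iff hn]
      exact ⟨i, h1, by omega, rfl⟩
  rcases hm with ⟨rfl, rfl⟩ | ⟨rfl, rfl⟩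
  · exact ⟨B, key B (List.Perm.refl _) (List.Perm.refl _) rfl⟩
  · refine ⟨B.reverse, key B.reverse ?_ ?_ ?_⟩
    · rw [Walk.edges_reverse]; exact (List.reverse_perm _)
    · rw [Walk.support_reverse]; exact (List.reverse_perm _)
    · rw [Walk.length_reverse]


lemma vtx_eq_iff {i : ℕ} (hi : i < n) {z : Fin n} : vtx hn i = z ↔ i = z.val := by
  constructor
  · rintro rfl; exact (vtx_val hn hi).symm
  · rintro rfl; exact vtx_eq_self hn z

lemma sym2_vtx_cases {i j : ℕ} (hi : i < n) (hj : j < n) {z w : Fin n}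
    (h : s(z, w) = s(vtx hn i, vtx hn j)) :
    (z.val = i ∧ w.val = j) ∨ (z.val = j ∧ w.val = i) := by
  rw [Sym2.eq_iff] at h
  rcases h with ⟨h1, h2⟩ | ⟨h1, h2⟩
  · left; exact ⟨by rw [h1, vtx_val hn hi], by rw [h2, vtx_val hn hj]⟩
  · right; exact ⟨by rw [h1, vtx_val hn hj], by rw [h2, vtx_val hn hi]⟩

lemma construct2 (hsub : cycG n ≤ G) (a c x y : ℕ) (hac : a ≤ c) (hcx : c < x)
    (hxy : x ≤ y) (hy : y < n) (m1 m2 : Fin n)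
    (hm : (m1 = vtx hn x ∧ m2 = vtx hn y) ∨ (m1 = vtx hn y ∧ m2 = vtx hn x))
    (g1 g2 : Sym2 (Fin n)) (hg1 : g1 = s(vtx hn c, m1)) (hg2 : g2 = s(m2, vtx hn a))
    (hg1G : g1 ∈ G.edgeSet) (hg2G : g2 ∈ G.edgeSet) (hne : g1 ≠ g2) :
    ∃ p : G.Walk (vtx hn a) (vtx hn a), p.IsCycle ∧ p.length = (c-a)+(y-x)+2 ∧
      g1 ∈ p.edges ∧ g2 ∈ p.edges ∧
      (∀ g ∈ p.edges, g = g1 ∨ g = g2 ∨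
        ∃ i, i+1 < n ∧ ((a ≤ i ∧ i+1 ≤ c) ∨ (x ≤ i ∧ i+1 ≤ y)) ∧
          g = s(vtx hn i, vtx hn (i+1))) := by
  obtain ⟨M, hMl, hMsn, hMsb, hMen, hMeb, hMem⟩ := midwalk hn hsub x y hxy hy m1 m2 hm
  obtain ⟨A, hAl, hAsn, hAsb, hAen, hAeb, hAem⟩ := midwalk hn hsub a c hac (by omega)
    (vtx hn a) (vtx hn c) (Or.inl ⟨rfl, rfl⟩)
  have hm1 : x ≤ m1.val ∧ m1.val ≤ y := by
    rcases hm with ⟨rfl, _⟩ | ⟨rfl, _⟩ <;> rw [vtx_val hn (by omega)] <;> omega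
  have hm2 : x ≤ m2.val ∧ m2.val ≤ y := by
    rcases hm with ⟨_, rfl⟩ | ⟨_, rfl⟩ <;> rw [vtx_val hn (by omega)] <;> omega
  have adj1 : G.Adj (vtx hn c) m1 := (SimpleGraph.mem_edgeSet G).mp (hg1 ▸ hg1G)
  have adj2 : G.Adj m2 (vtx hn a) := (SimpleGraph.mem_edgeSet G).mp (hg2 ▸ hg2G)
  set p : G.Walk (vtx hn a) (vtx hn a) :=
    A.append (Walk.cons adj1 (M.append (Walk.cons adj2 Walk.nil))) with hp
  have hpe : p.edges = A.edges ++ g1 :: (M.edges ++ [g2]) := by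
    rw [hp, Walk.edges_append, Walk.edges_cons, Walk.edges_append, Walk.edges_cons,
      Walk.edges_nil, hg1, hg2]
  have hpl : p.length = (c-a)+(y-x)+2 := by
    rw [hp, Walk.length_append, Walk.length_cons, Walk.length_append, Walk.length_cons,
      Walk.length_nil, hMl, hAl]
    omega
  have hps : p.support = A.support ++ (M.support ++ [vtx hn a]) := by
    rw [hp, Walk.support_append, Walk.support_cons, List.tail_cons, Walk.support_append,
      Walk.support_cons, List.tail_cons, Walk.support_nil]
  -- edge distinctness facts
  have hav : (vtx hn a).val = a := vtx_val hn (by omega)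
  have hcv : (vtx hn c).val = c := vtx_val hn (by omega)
  have hg1A : g1 ∉ A.edges := by
    intro hmem
    obtain ⟨i, h1, h2, hgi⟩ := hAeb g1 hmem
    rcases sym2_vtx_cases hn (by omega) (by omega) (hg1.symm.trans hgi) with ⟨q1, q2⟩ | ⟨q1, q2⟩ <;>
      omega
  have hg2A : g2 ∉ A.edges := by
    intro hmem
    obtain ⟨i, h1, h2, hgi⟩ := hAeb g2 hmem
    rcases sym2_vtx_cases hn (by omega) (by omega) (hg2.symm.trans hgi) with ⟨q1, q2⟩ | ⟨q1, q2⟩ <;>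
      omega
  have hg1M : g1 ∉ M.edges := by
    intro hmem
    obtain ⟨i, h1, h2, hgi⟩ := hMeb g1 hmem
    rcases sym2_vtx_cases hn (by omega) (by omega) (hg1.symm.trans hgi) with ⟨q1, q2⟩ | ⟨q1, q2⟩ <;>
      omega
  have hg2M : g2 ∉ M.edges := by
    intro hmem
    obtain ⟨i, h1, h2, hgi⟩ := hMeb g2 hmem
    rcases sym2_vtx_cases hn (by omega) (by omega) (hg2.symm.trans hgi) with ⟨q1, q2⟩ | ⟨q1, q2⟩ <;>
      omega
  have hAM : ∀ g ∈ A.edges, g ∉ M.edges := by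
    intro g hga hgm
    obtain ⟨i, hi1, hi2, rfl⟩ := hAeb g hga
    obtain ⟨j, hj1, hj2, hgj⟩ := hMeb _ hgm
    have := step_sym2_inj hn (by omega) (by omega) hgj
    omega
  refine ⟨p, ?_, hpl, ?_, ?_, ?_⟩
  · rw [Walk.isCycle_def, Walk.isTrail_def]
    refine ⟨?_, ?_, ?_⟩
    · rw [hpe]
      rw [List.nodup_append]
      refine ⟨hAen, ?_, ?_⟩
      · rw [List.nodup_cons, List.nodup_append]
        refine ⟨?_, hMen, List.nodup_singleton _, ?_⟩
        · intro hmem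
          rw [List.mem_append, List.mem_singleton] at hmem
          rcases hmem with h | h
          · exact hg1M h
          · exact hne h
        · intro g hg g' hg' hgg; rw [← hgg] at hg'
          rw [List.mem_singleton] at hg'
          subst hg'
          exact hg2M hg
      · intro g hg g' hg' hgg; rw [← hgg] at hg'
        rw [List.mem_cons, List.mem_append, List.mem_singleton] at hg'
        rcases hg' with h | h | h
        · exact hg1A (h ▸ hg)
        · exact hAM g hg h
        · exact hg2A (h ▸ hg)
    · intro hnil
      have := hpl
      rw [hnil, Walk.length_nil] at this
      omega
    · obtain ⟨T, hT⟩ : ∃ T, A.support = vtx hn a :: T := ⟨_, Walk.support_eq_cons A⟩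
      have hptail : p.support.tail = T ++ (M.support ++ [vtx hn a]) := by
        rw [hps, hT]; rfl
      rw [hptail]
      have hTn : T.Nodup := by
        have := hAsn; rw [hT, List.nodup_cons] at this; exact this.2
      have hTna : vtx hn a ∉ T := by
        have := hAsn; rw [hT, List.nodup_cons] at this; exact this.1
      have hTb : ∀ z ∈ T, a ≤ z.val ∧ z.val ≤ c ∧ z ≠ vtx hn a := by
        intro z hz
        have hz' := hAsb z (by rw [hT]; exact List.mem_cons_of_mem _ hz)
        exact ⟨hz'.1, hz'.2, fun hh => hTna (hh ▸ hz)⟩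
      rw [List.nodup_append]
      refine ⟨hTn, ?_, ?_⟩
      · rw [List.nodup_append]
        refine ⟨hMsn, List.nodup_singleton _, ?_⟩
        · intro z hz z' hz' hzz; rw [← hzz] at hz'
          rw [List.mem_singleton] at hz'
          subst hz'
          have := hMsb _ hz
          omega
      · intro z hz z' hz' hzz; rw [← hzz] at hz'
        rw [List.mem_append, List.mem_singleton] at hz'
        obtain ⟨hb1, hb2, hb3⟩ := hTb z hz
        rcases hz' with h | h
        · have := hMsb z h; omega
        · exact hb3 h
  · rw [hpe]
    simp
  · rw [hpe]
    simp
  · intro g hg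
    rw [hpe, List.mem_append, List.mem_cons, List.mem_append, List.mem_singleton] at hg
    rcases hg with h | h | h | h
    · obtain ⟨i, h1, h2, rfl⟩ := hAeb g h
      exact Or.inr (Or.inr ⟨i, by omega, Or.inl ⟨h1, h2⟩, rfl⟩)
    · exact Or.inl h
    · obtain ⟨i, h1, h2, rfl⟩ := hMeb g h
      exact Or.inr (Or.inr ⟨i, by omega, Or.inr ⟨h1, h2⟩, rfl⟩)
    · exact Or.inr (Or.inl h)


lemma construct3 (hsub : cycG n ≤ G) (a x y d : ℕ) (hax : a < x) (hxy : x ≤ y)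
    (hyd : y < d) (hd : d ≤ n - 1) (m1 m2 : Fin n)
    (hm : (m1 = vtx hn x ∧ m2 = vtx hn y) ∨ (m1 = vtx hn y ∧ m2 = vtx hn x))
    (g1 g2 : Sym2 (Fin n)) (hg1 : g1 = s(vtx hn a, m1)) (hg2 : g2 = s(m2, vtx hn d))
    (hg1G : g1 ∈ G.edgeSet) (hg2G : g2 ∈ G.edgeSet) (hne : g1 ≠ g2) :
    ∃ p : G.Walk (vtx hn 0) (vtx hn 0), p.IsCycle ∧
      p.length = a + (y - x) + (n - 1 - d) + 3 ∧
      g1 ∈ p.edges ∧ g2 ∈ p.edges ∧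
      (∀ g ∈ p.edges, g = g1 ∨ g = g2 ∨ g ∈ (cycG n).edgeSet) ∧
      (∀ i, x ≤ i → i + 1 ≤ y → s(vtx hn i, vtx hn (i+1)) ∈ p.edges) := by
  have hn2 : 2 ≤ n := by omega
  obtain ⟨M, hMl, hMsn, hMsb, hMen, hMeb, hMem⟩ := midwalk hn hsub x y hxy (by omega) m1 m2 hm
  obtain ⟨A, hAl, hAsn, hAsb, hAen, hAeb, hAem⟩ := midwalk hn hsub 0 a (by omega) (by omega)
    (vtx hn 0) (vtx hn a) (Or.inl ⟨rfl, rfl⟩)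
  obtain ⟨D, hDl, hDsn, hDsb, hDen, hDeb, hDem⟩ := midwalk hn hsub d (n-1) (by omega) (by omega)
    (vtx hn d) (vtx hn (n-1)) (Or.inl ⟨rfl, rfl⟩)
  have hm1 : x ≤ m1.val ∧ m1.val ≤ y := by
    rcases hm with ⟨rfl, _⟩ | ⟨rfl, _⟩ <;> rw [vtx_val hn (by omega)] <;> omega
  have hm2 : x ≤ m2.val ∧ m2.val ≤ y := by
    rcases hm with ⟨_, rfl⟩ | ⟨_, rfl⟩ <;> rw [vtx_val hn (by omega)] <;> omega
  have adj1 : G.Adj (vtx hn a) m1 := (SimpleGraph.mem_edgeSet G).mp (hg1 ▸ hg1G)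
  have adj2 : G.Adj m2 (vtx hn d) := (SimpleGraph.mem_edgeSet G).mp (hg2 ▸ hg2G)
  have adjw : G.Adj (vtx hn (n-1)) (vtx hn 0) := hsub (cyc_adj_wrap hn hn2)
  set wedge : Sym2 (Fin n) := s(vtx hn (n-1), vtx hn 0) with hwedge
  have hwcyc : wedge ∈ (cycG n).edgeSet := wrap_mem_cycE hn hn2
  set p : G.Walk (vtx hn 0) (vtx hn 0) :=
    A.append (Walk.cons adj1 (M.append (Walk.cons adj2 (D.append (Walk.cons adjw Walk.nil)))))
    with hp
  have hpe : p.edges = A.edges ++ g1 :: (M.edges ++ g2 :: (D.edges ++ [wedge])) := by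
    rw [hp, Walk.edges_append, Walk.edges_cons, Walk.edges_append, Walk.edges_cons,
      Walk.edges_append, Walk.edges_cons, Walk.edges_nil, hg1, hg2]
  have hpl : p.length = a + (y - x) + (n - 1 - d) + 3 := by
    rw [hp, Walk.length_append, Walk.length_cons, Walk.length_append, Walk.length_cons,
      Walk.length_append, Walk.length_cons, Walk.length_nil, hMl, hAl, hDl]
    omega
  have hps : p.support = A.support ++ (M.support ++ (D.support ++ [vtx hn 0])) := by
    rw [hp, Walk.support_append, Walk.support_cons, List.tail_cons, Walk.support_append,
      Walk.support_cons, List.tail_cons, Walk.support_append, Walk.support_cons, List.tail_cons,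
      Walk.support_nil]
  have hav : (vtx hn a).val = a := vtx_val hn (by omega)
  have hdv : (vtx hn d).val = d := vtx_val hn (by omega)
  have h0v : (vtx hn 0).val = 0 := vtx_val hn (by omega)
  have hnv : (vtx hn (n-1)).val = n - 1 := vtx_val hn (by omega)
  have hg1A : g1 ∉ A.edges := by
    intro hmem
    obtain ⟨i, h1, h2, hgi⟩ := hAeb g1 hmem
    rcases sym2_vtx_cases hn (by omega) (by omega) (hg1.symm.trans hgi) with ⟨q1, q2⟩ | ⟨q1, q2⟩ <;>
      omega
  have hg2A : g2 ∉ A.edges := by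
    intro hmem
    obtain ⟨i, h1, h2, hgi⟩ := hAeb g2 hmem
    rcases sym2_vtx_cases hn (by omega) (by omega) (hg2.symm.trans hgi) with ⟨q1, q2⟩ | ⟨q1, q2⟩ <;>
      omega
  have hg1M : g1 ∉ M.edges := by
    intro hmem
    obtain ⟨i, h1, h2, hgi⟩ := hMeb g1 hmem
    rcases sym2_vtx_cases hn (by omega) (by omega) (hg1.symm.trans hgi) with ⟨q1, q2⟩ | ⟨q1, q2⟩ <;>
      omega
  have hg2M : g2 ∉ M.edges := by
    intro hmem
    obtain ⟨i, h1, h2, hgi⟩ := hMeb g2 hmem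
    rcases sym2_vtx_cases hn (by omega) (by omega) (hg2.symm.trans hgi) with ⟨q1, q2⟩ | ⟨q1, q2⟩ <;>
      omega
  have hg1D : g1 ∉ D.edges := by
    intro hmem
    obtain ⟨i, h1, h2, hgi⟩ := hDeb g1 hmem
    rcases sym2_vtx_cases hn (by omega) (by omega) (hg1.symm.trans hgi) with ⟨q1, q2⟩ | ⟨q1, q2⟩ <;>
      omega
  have hg2D : g2 ∉ D.edges := by
    intro hmem
    obtain ⟨i, h1, h2, hgi⟩ := hDeb g2 hmem
    rcases sym2_vtx_cases hn (by omega) (by omega) (hg2.symm.trans hgi) with ⟨q1, q2⟩ | ⟨q1, q2⟩ <;>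
      omega
  have hg1w : g1 ≠ wedge := by
    intro hh
    rcases sym2_vtx_cases hn (by omega) (by omega) ((hg1.symm.trans hh).trans hwedge)
      with ⟨q1, q2⟩ | ⟨q1, q2⟩ <;> omega
  have hg2w : g2 ≠ wedge := by
    intro hh
    rcases sym2_vtx_cases hn (by omega) (by omega) ((hg2.symm.trans hh).trans hwedge)
      with ⟨q1, q2⟩ | ⟨q1, q2⟩ <;> omega
  have hwA : wedge ∉ A.edges := by
    intro hmem
    obtain ⟨i, h1, h2, hgi⟩ := hAeb wedge hmem
    rcases sym2_vtx_cases hn (by omega) (by omega) (hgi :) with ⟨q1, q2⟩ | ⟨q1, q2⟩ <;> omega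
  have hwM : wedge ∉ M.edges := by
    intro hmem
    obtain ⟨i, h1, h2, hgi⟩ := hMeb wedge hmem
    rcases sym2_vtx_cases hn (by omega) (by omega) (hgi :) with ⟨q1, q2⟩ | ⟨q1, q2⟩ <;> omega
  have hwD : wedge ∉ D.edges := by
    intro hmem
    obtain ⟨i, h1, h2, hgi⟩ := hDeb wedge hmem
    rcases sym2_vtx_cases hn (by omega) (by omega) (hgi :) with ⟨q1, q2⟩ | ⟨q1, q2⟩ <;> omega
  have hAM : ∀ g ∈ A.edges, g ∉ M.edges := by
    intro g hga hgm
    obtain ⟨i, hi1, hi2, rfl⟩ := hAeb g hga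
    obtain ⟨j, hj1, hj2, hgj⟩ := hMeb _ hgm
    have := step_sym2_inj hn (by omega) (by omega) hgj
    omega
  have hAD : ∀ g ∈ A.edges, g ∉ D.edges := by
    intro g hga hgm
    obtain ⟨i, hi1, hi2, rfl⟩ := hAeb g hga
    obtain ⟨j, hj1, hj2, hgj⟩ := hDeb _ hgm
    have := step_sym2_inj hn (by omega) (by omega) hgj
    omega
  have hMD : ∀ g ∈ M.edges, g ∉ D.edges := by
    intro g hga hgm
    obtain ⟨i, hi1, hi2, rfl⟩ := hMeb g hga
    obtain ⟨j, hj1, hj2, hgj⟩ := hDeb _ hgm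
    have := step_sym2_inj hn (by omega) (by omega) hgj
    omega
  refine ⟨p, ?_, hpl, ?_, ?_, ?_, ?_⟩
  · rw [Walk.isCycle_def, Walk.isTrail_def]
    refine ⟨?_, ?_, ?_⟩
    · rw [hpe, List.nodup_append]
      refine ⟨hAen, ?_, ?_⟩
      · rw [List.nodup_cons, List.mem_append, List.mem_cons, List.mem_append, List.mem_singleton]
        constructor
        · rintro (h | h | h | h)
          · exact hg1M h
          · exact hne h
          · exact hg1D h
          · exact hg1w h
        · rw [List.nodup_append]
          refine ⟨hMen, ?_, ?_⟩
          · rw [List.nodup_cons, List.mem_append, List.mem_singleton]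
            constructor
            · rintro (h | h)
              · exact hg2D h
              · exact hg2w h
            · rw [List.nodup_append]
              refine ⟨hDen, List.nodup_singleton _, ?_⟩
              intro g hg g' hg' hgg; rw [← hgg] at hg'
              rw [List.mem_singleton] at hg'
              subst hg'
              exact hwD hg
          · intro g hg g' hg' hgg; rw [← hgg] at hg'
            rw [List.mem_cons, List.mem_append, List.mem_singleton] at hg'
            rcases hg' with h | h | h
            · exact hg2M (h ▸ hg)
            · exact hMD g hg h
            · exact hwM (h ▸ hg)
      · intro g hg g' hg' hgg; rw [← hgg] at hg'
        rw [List.mem_cons, List.mem_append, List.mem_cons, List.mem_append,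
          List.mem_singleton] at hg'
        rcases hg' with h | h | h | h | h
        · exact hg1A (h ▸ hg)
        · exact hAM g hg h
        · exact hg2A (h ▸ hg)
        · exact hAD g hg h
        · exact hwA (h ▸ hg)
    · intro hnil
      have := hpl
      rw [hnil, Walk.length_nil] at this
      omega
    · obtain ⟨T, hT⟩ : ∃ T, A.support = vtx hn 0 :: T := ⟨_, Walk.support_eq_cons A⟩
      have hptail : p.support.tail = T ++ (M.support ++ (D.support ++ [vtx hn 0])) := by
        rw [hps, hT]; rfl
      rw [hptail]
      have hTn : T.Nodup := by
        have := hAsn; rw [hT, List.nodup_cons] at this; exact this.2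
      have hTn0 : vtx hn 0 ∉ T := by
        have := hAsn; rw [hT, List.nodup_cons] at this; exact this.1
      have hTb : ∀ z ∈ T, z.val ≤ a ∧ z ≠ vtx hn 0 := by
        intro z hz
        have hz' := hAsb z (by rw [hT]; exact List.mem_cons_of_mem _ hz)
        exact ⟨hz'.2, fun hh => hTn0 (hh ▸ hz)⟩
      rw [List.nodup_append]
      refine ⟨hTn, ?_, ?_⟩
      · rw [List.nodup_append]
        refine ⟨hMsn, ?_, ?_⟩
        · rw [List.nodup_append]
          refine ⟨hDsn, List.nodup_singleton _, ?_⟩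
          intro z hz z' hz' hzz; rw [← hzz] at hz'
          rw [List.mem_singleton] at hz'
          subst hz'
          have := hDsb _ hz
          omega
        · intro z hz z' hz' hzz; rw [← hzz] at hz'
          rw [List.mem_append, List.mem_singleton] at hz'
          have := hMsb z hz
          rcases hz' with h | h
          · have := hDsb z h; omega
          · subst h; omega
      · intro z hz z' hz' hzz; rw [← hzz] at hz'
        rw [List.mem_append, List.mem_append, List.mem_singleton] at hz'
        obtain ⟨hb1, hb2⟩ := hTb z hz
        rcases hz' with h | h | h
        · have := hMsb z h; omega
        · have := hDsb z h; omega
        · exact hb2 h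
  · rw [hpe]
    simp
  · rw [hpe]
    simp
  · intro g hg
    rw [hpe, List.mem_append, List.mem_cons, List.mem_append, List.mem_cons, List.mem_append,
      List.mem_singleton] at hg
    rcases hg with h | h | h | h | h | h
    · obtain ⟨i, h1, h2, rfl⟩ := hAeb g h
      exact Or.inr (Or.inr (step_mem_cycE hn (by omega)))
    · exact Or.inl h
    · obtain ⟨i, h1, h2, rfl⟩ := hMeb g h
      exact Or.inr (Or.inr (step_mem_cycE hn (by omega)))
    · exact Or.inr (Or.inl h)
    · obtain ⟨i, h1, h2, rfl⟩ := hDeb g h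
      exact Or.inr (Or.inr (step_mem_cycE hn (by omega)))
    · exact Or.inr (Or.inr (h ▸ hwcyc))
  · intro i hi1 hi2
    rw [hpe, List.mem_append, List.mem_cons, List.mem_append]
    exact Or.inr (Or.inr (Or.inl (hMem i hi1 hi2)))


lemma sym2_vtx_cases' {i j : ℕ} (hi : i < n) (hj : j < n) {z w : Fin n}
    (h : s(vtx hn i, vtx hn j) = s(z, w)) :
    (z.val = i ∧ w.val = j) ∨ (z.val = j ∧ w.val = i) :=
  sym2_vtx_cases hn hi hj h.symm

lemma sym2_sorted (e : Sym2 (Fin n)) (h : ¬ e.IsDiag) :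
    ∃ u v : Fin n, u.val < v.val ∧ e = s(u, v) := by
  induction e using Sym2.inductionOn with
  | hf u v =>
    rcases lt_trichotomy u.val v.val with h1 | h1 | h1
    · exact ⟨u, v, h1, rfl⟩
    · exact absurd (Sym2.mk_isDiag_iff.2 (Fin.ext h1)) h
    · exact ⟨v, u, h1, Sym2.eq_swap⟩

lemma chord_rep {e : Sym2 (Fin n)} (he : e ∈ G.edgeSet \ (cycG n).edgeSet) :
    ∃ a b : ℕ, a < b ∧ b < n ∧ e = s(vtx hn a, vtx hn b) ∧ a + 1 < b ∧
      ¬(a = 0 ∧ b = n - 1) := by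
  have hnd : ¬ e.IsDiag := SimpleGraph.not_isDiag_of_mem_edgeSet G he.1
  obtain ⟨u, v, huv, rfl⟩ := sym2_sorted e hnd
  have hnadj : ¬ (cycG n).Adj u v := he.2
  rw [cycG, SimpleGraph.fromRel_adj] at hnadj
  push_neg at hnadj
  have hne : u ≠ v := fun hh => by rw [hh] at huv; omega
  have h2 := hnadj hne
  refine ⟨u.val, v.val, huv, v.2, by rw [vtx_eq_self, vtx_eq_self], ?_, ?_⟩
  · by_contra hh
    have hv : v.val = u.val + 1 := by omega
    have : (u.val + 1) % n = v.val := by rw [hv]; exact Nat.mod_eq_of_lt (by omega)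
    exact h2.1 this
  · rintro ⟨h0, hN⟩
    have : (v.val + 1) % n = u.val := by
      rw [hN, h0]
      have : n - 1 + 1 = n := by omega
      rw [this, Nat.mod_self]
    exact h2.2 this

lemma crossing_symm {e f : Sym2 (Fin n)} (h : Crossing e f) : Crossing f e := by
  obtain ⟨a, b, c, d, hrep, h1, h2, h3⟩ := h
  rcases hrep with ⟨he, hf⟩ | ⟨he, hf⟩
  · exact ⟨a, b, c, d, Or.inr ⟨hf, he⟩, h1, h2, h3⟩
  · exact ⟨a, b, c, d, Or.inl ⟨hf, he⟩, h1, h2, h3⟩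

lemma crossing_core {e f : Sym2 (Fin n)} {a b c d : ℕ} (ha : a < b) (hb : b < n)
    (hc : c < d) (hd : d < n)
    (hea : e = s(vtx hn a, vtx hn b)) (hfc : f = s(vtx hn c, vtx hn d)) (hcr : Crossing e f) :
    (a < c ∧ c < b ∧ b < d) ∨ (c < a ∧ a < d ∧ d < b) := by
  obtain ⟨a', b', c', d', hrep, h1, h2, h3⟩ := hcr
  rcases hrep with ⟨he', hf'⟩ | ⟨he', hf'⟩
  · rcases sym2_vtx_cases' hn (by omega) hb (hea.symm.trans he') with ⟨q1, q2⟩ | ⟨q1, q2⟩ <;>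
    rcases sym2_vtx_cases' hn (by omega) hd (hfc.symm.trans hf') with ⟨r1, r2⟩ | ⟨r1, r2⟩ <;>
      omega
  · rcases sym2_vtx_cases' hn (by omega) hb (hea.symm.trans he') with ⟨q1, q2⟩ | ⟨q1, q2⟩ <;>
    rcases sym2_vtx_cases' hn (by omega) hd (hfc.symm.trans hf') with ⟨r1, r2⟩ | ⟨r1, r2⟩ <;>
      omega

lemma main_sorted (hn3 : 3 ≤ n) (hsub : cycG n ≤ G) (e f : Sym2 (Fin n)) (a b c d : ℕ)
    (he : e ∈ G.edgeSet \ (cycG n).edgeSet) (hf : f ∈ G.edgeSet \ (cycG n).edgeSet)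
    (hef : e ≠ f)
    (hea : e = s(vtx hn a, vtx hn b)) (hab : a < b) (hbn : b < n)
    (hfc : f = s(vtx hn c, vtx hn d)) (hcd : c < d) (hdn : d < n)
    (hsort : a < c ∨ (a = c ∧ d < b)) :
    ∃ (q1 q2 : Σ u : Fin n, G.Walk u u) (w : Sym2 (Fin n)),
      q1.2.IsCycle ∧ 3 ≤ q1.2.length ∧ q1.2.length ≤ n ∧
      ({g | g ∈ q1.2.edges} \ (cycG n).edgeSet = {e, f}) ∧ w ∉ q1.2.edges ∧
      (Crossing e f →
        q2.2.IsCycle ∧ 3 ≤ q2.2.length ∧ q2.2.length ≤ n ∧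
        ({g | g ∈ q2.2.edges} \ (cycG n).edgeSet = {e, f}) ∧ w ∈ q2.2.edges) := by
  have hfe : f = s(vtx hn d, vtx hn c) := hfc.trans Sym2.eq_swap
  have heb : e = s(vtx hn b, vtx hn a) := hea.trans Sym2.eq_swap
  rcases le_or_gt b c with hbc | hcb
  · -- disjoint case: a < b ≤ c < d
    have hac : a < c := by omega
    obtain ⟨p, hcyc, hlen, he1, he2, hchar, _⟩ := construct3 hn hsub a b c d hab hbc hcd
      (by omega) (vtx hn b) (vtx hn c) (Or.inl ⟨rfl, rfl⟩) e f hea hfc he.1 hf.1 hef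
    refine ⟨⟨_, p⟩, ⟨_, p⟩, s(vtx hn 0, vtx hn 0), hcyc, (by show 3 ≤ p.length; omega),
      (by show p.length ≤ n; omega), ?_, ?_, ?_⟩
    · ext g
      simp only [Set.mem_diff, Set.mem_setOf_eq, Set.mem_insert_iff, Set.mem_singleton_iff]
      constructor
      · rintro ⟨hg, hgc⟩
        rcases hchar g hg with h | h | h
        · exact Or.inl h
        · exact Or.inr h
        · exact absurd h hgc
      · rintro (rfl | rfl)
        · exact ⟨he1, he.2⟩
        · exact ⟨he2, hf.2⟩
    · intro hmem
      exact SimpleGraph.irrefl G (p.adj_of_mem_edges hmem)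
    · intro hcr
      rcases crossing_core hn hab hbn hcd hdn hea hfc hcr with ⟨u1, u2, u3⟩ | ⟨u1, u2, u3⟩ <;>
        omega
  · rcases le_or_gt d b with hdb | hbd
    · -- nested case
      have hac : a ≤ c := by omega
      obtain ⟨p, hcyc, hlen, he1, he2, hchar⟩ := construct2 hn hsub a c d b hac hcd hdb hbn
        (vtx hn d) (vtx hn b) (Or.inl ⟨rfl, rfl⟩) f e hfc heb hf.1 he.1 (Ne.symm hef)
      refine ⟨⟨_, p⟩, ⟨_, p⟩, s(vtx hn 0, vtx hn 0), hcyc, (by show 3 ≤ p.length; omega),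
        (by show p.length ≤ n; omega), ?_, ?_, ?_⟩
      · ext g
        simp only [Set.mem_diff, Set.mem_setOf_eq, Set.mem_insert_iff, Set.mem_singleton_iff]
        constructor
        · rintro ⟨hg, hgc⟩
          rcases hchar g hg with h | h | h
          · exact Or.inr h
          · exact Or.inl h
          · obtain ⟨i, hi1, _, rfl⟩ := h
            exact absurd (step_mem_cycE hn hi1) hgc
        · rintro (rfl | rfl)
          · exact ⟨he2, he.2⟩
          · exact ⟨he1, hf.2⟩
      · intro hmem
        exact SimpleGraph.irrefl G (p.adj_of_mem_edges hmem)
      · intro hcr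
        rcases crossing_core hn hab hbn hcd hdn hea hfc hcr with ⟨u1, u2, u3⟩ | ⟨u1, u2, u3⟩ <;>
          omega
    · -- crossing case: a < c < b < d
      have hac : a < c := by omega
      obtain ⟨p, hcyc, hlen, he1, he2, hchar⟩ := construct2 hn hsub a c b d (by omega) hcb
        (by omega) hdn (vtx hn d) (vtx hn b) (Or.inr ⟨rfl, rfl⟩) f e hfc heb hf.1 he.1
        (Ne.symm hef)
      obtain ⟨p2, hcyc2, hlen2, hee1, hee2, hchar2, hmid2⟩ := construct3 hn hsub a c b d hac
        (by omega) hbd (by omega) (vtx hn b) (vtx hn c) (Or.inr ⟨rfl, rfl⟩) e f hea hfc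
        he.1 hf.1 hef
      refine ⟨⟨_, p⟩, ⟨_, p2⟩, s(vtx hn c, vtx hn (c+1)), hcyc, (by show 3 ≤ p.length; omega),
        (by show p.length ≤ n; omega), ?_, ?_, ?_⟩
      · ext g
        simp only [Set.mem_diff, Set.mem_setOf_eq, Set.mem_insert_iff, Set.mem_singleton_iff]
        constructor
        · rintro ⟨hg, hgc⟩
          rcases hchar g hg with h | h | h
          · exact Or.inr h
          · exact Or.inl h
          · obtain ⟨i, hi1, _, rfl⟩ := h
            exact absurd (step_mem_cycE hn hi1) hgc
        · rintro (rfl | rfl)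
          · exact ⟨he2, he.2⟩
          · exact ⟨he1, hf.2⟩
      · intro hmem
        have hcv : (vtx hn c).val = c := vtx_val hn (by omega)
        have hcv1 : (vtx hn (c+1)).val = c + 1 := vtx_val hn (by omega)
        rcases hchar _ hmem with h | h | h
        · rcases sym2_vtx_cases hn (i := c) (j := d) (by omega) hdn (h.trans hfc)
            with ⟨q1, q2⟩ | ⟨q1, q2⟩ <;> omega
        · rcases sym2_vtx_cases hn (i := a) (j := b) (by omega) hbn (h.trans hea)
            with ⟨q1, q2⟩ | ⟨q1, q2⟩ <;> omega
        · obtain ⟨i, hi0, hi1, hgi⟩ := h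
          have := step_sym2_inj hn (i := c) (j := i) (by omega) (by omega) hgi
          omega
      · intro _
        refine ⟨hcyc2, (by show 3 ≤ p2.length; omega), (by show p2.length ≤ n; omega), ?_,
          hmid2 c (le_refl c) (by omega)⟩
        ext g
        simp only [Set.mem_diff, Set.mem_setOf_eq, Set.mem_insert_iff, Set.mem_singleton_iff]
        constructor
        · rintro ⟨hg, hgc⟩
          rcases hchar2 g hg with h | h | h
          · exact Or.inl h
          · exact Or.inr h
          · exact absurd h hgc
        · rintro (rfl | rfl)
          · exact ⟨hee1, he.2⟩
          · exact ⟨hee2, hf.2⟩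


lemma crossing_ne {e f : Sym2 (Fin n)} (h : Crossing e f) : e ≠ f := by
  obtain ⟨a, b, c, d, hrep, h1, h2, h3⟩ := h
  rintro rfl
  have hq : s(a, b) = s(c, d) := by
    rcases hrep with ⟨he, hf⟩ | ⟨he, hf⟩
    · exact he.symm.trans hf
    · exact hf.symm.trans he
  rcases Sym2.eq_iff.1 hq with ⟨r1, r2⟩ | ⟨r1, r2⟩
  · have := congrArg Fin.val r1
    omega
  · have := congrArg Fin.val r1
    have := congrArg Fin.val r2
    omega

lemma main (hn3 : 3 ≤ n) (hsub : cycG n ≤ G) (x : Sym2 (Sym2 (Fin n)))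
    (hx : ∃ e f, x = s(e, f) ∧ e ∈ G.edgeSet \ (cycG n).edgeSet ∧
      f ∈ G.edgeSet \ (cycG n).edgeSet ∧ e ≠ f) :
    ∃ (q1 q2 : Σ u : Fin n, G.Walk u u) (e f w : Sym2 (Fin n)),
      x = s(e, f) ∧ e ≠ f ∧
      q1.2.IsCycle ∧ 3 ≤ q1.2.length ∧ q1.2.length ≤ n ∧
      ({g | g ∈ q1.2.edges} \ (cycG n).edgeSet = {e, f}) ∧ w ∉ q1.2.edges ∧
      ((∃ e' f', x = s(e', f') ∧ e' ∈ G.edgeSet \ (cycG n).edgeSet ∧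
          f' ∈ G.edgeSet \ (cycG n).edgeSet ∧ Crossing e' f') →
        q2.2.IsCycle ∧ 3 ≤ q2.2.length ∧ q2.2.length ≤ n ∧
        ({g | g ∈ q2.2.edges} \ (cycG n).edgeSet = {e, f}) ∧ w ∈ q2.2.edges) := by
  have hn : 0 < n := by omega
  obtain ⟨e, f, rfl, he, hf, hef⟩ := hx
  obtain ⟨a, b, hab, hbn, hea, _, _⟩ := chord_rep hn he
  obtain ⟨c, d, hcd, hdn, hfc, _, _⟩ := chord_rep hn hf
  have hcrx : (∃ e' f', s(e, f) = s(e', f') ∧ e' ∈ G.edgeSet \ (cycG n).edgeSet ∧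
      f' ∈ G.edgeSet \ (cycG n).edgeSet ∧ Crossing e' f') → Crossing e f := by
    rintro ⟨e', f', hx', _, _, hcr⟩
    rcases Sym2.eq_iff.1 hx' with ⟨r1, r2⟩ | ⟨r1, r2⟩
    · rwa [← r1, ← r2] at hcr
    · rw [← r1, ← r2] at hcr
      exact crossing_symm hcr
  by_cases hs : a < c ∨ (a = c ∧ d < b)
  · obtain ⟨q1, q2, w, hc1, hc2, hc3, hc4, hc5, hc6⟩ :=
      main_sorted hn hn3 hsub e f a b c d he hf hef hea hab hbn hfc hcd hdn hs
    exact ⟨q1, q2, e, f, w, rfl, hef, hc1, hc2, hc3, hc4, hc5, fun hcc => hc6 (hcrx hcc)⟩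
  · have hne' : ¬(a = c ∧ b = d) := by
      rintro ⟨rfl, rfl⟩
      exact hef (hea.trans hfc.symm)
    have hs' : c < a ∨ (c = a ∧ b < d) := by
      rcases Nat.lt_trichotomy a c with h | h | h
      · exact absurd (Or.inl h) hs
      · rcases Nat.lt_trichotomy b d with h2 | h2 | h2
        · exact Or.inr ⟨h.symm, h2⟩
        · exact absurd ⟨h, h2⟩ hne'
        · exact absurd (Or.inr ⟨h, h2⟩) hs
      · exact Or.inl h
    obtain ⟨q1, q2, w, hc1, hc2, hc3, hc4, hc5, hc6⟩ :=
      main_sorted hn hn3 hsub f e c d a b hf he (Ne.symm hef) hfc hcd hdn hea hab hbn hs'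
    refine ⟨q1, q2, f, e, w, Sym2.eq_swap, Ne.symm hef, hc1, hc2, hc3, hc4, hc5, ?_⟩
    intro hcc
    exact hc6 (crossing_symm (hcrx hcc))

lemma pair_from_set {α : Type*} {e f e' f' : α} (hne : e ≠ f)
    (h : ({e, f} : Set α) = {e', f'}) : s(e, f) = s(e', f') := by
  have he : e = e' ∨ e = f' := by
    have : e ∈ ({e', f'} : Set α) := h ▸ (by left; rfl)
    simpa using this
  have hff : f = e' ∨ f = f' := by
    have : f ∈ ({e', f'} : Set α) := h ▸ (by right; rfl)
    simpa using this
  rcases he with rfl | rfl <;> rcases hff with rfl | rfl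
  · exact absurd rfl hne
  · rfl
  · exact Sym2.eq_swap
  · exact absurd rfl hne

end Mid
end Scratch

/-- Let `n ≥ 3` and let `G` be an `n`-vertex graph, obtained from the cycle `C_n` by adding
`k` chords, with no two cycles of the same length. If `c` is the number of (unordered)
crossing pairs of chords, then `2c + (C(k, 2) - c) ≤ n`, i.e. `C(k, 2) + c ≤ n`. -/




theorem stmt15 (n : ℕ) (hn : 3 ≤ n) (G : SimpleGraph (Fin n)) (hsub : cycG n ≤ G)
    (hnr : NoRepeatedCycleLength G) (k : ℕ)
    (hk : (G.edgeSet \ (cycG n).edgeSet).ncard = k) (c : ℕ)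
    (hc : Set.ncard {p : Sym2 (Sym2 (Fin n)) | ∃ e f : Sym2 (Fin n),
        p = s(e, f) ∧ e ∈ G.edgeSet \ (cycG n).edgeSet ∧
        f ∈ G.edgeSet \ (cycG n).edgeSet ∧ Crossing e f} = c) :
    Nat.choose k 2 + c ≤ n := by
  classical
  have hn0 : 0 < n := by omega
  set K : Set (Sym2 (Fin n)) := G.edgeSet \ (cycG n).edgeSet with hKdef
  set S1 : Set (Sym2 (Sym2 (Fin n))) :=
    {p | ∃ e f : Sym2 (Fin n), p = s(e, f) ∧ e ∈ K ∧ f ∈ K ∧ e ≠ f} with hS1def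
  set S2 : Set (Sym2 (Sym2 (Fin n))) :=
    {p | ∃ e f : Sym2 (Fin n), p = s(e, f) ∧ e ∈ K ∧ f ∈ K ∧ Crossing e f} with hS2def
  have hS2sub : S2 ⊆ S1 := by
    rintro p ⟨e, f, rfl, he, hf, hcr⟩
    exact ⟨e, f, rfl, he, hf, Scratch.crossing_ne hcr⟩
  have hmain : ∀ x, x ∈ S1 → _ := fun x hx => Scratch.main hn hsub x hx
  choose q1 q2 ee ff ww h1 h2 h3 h4 h5 h6 h7 h8 using hmain
  -- injection into Fin (n - 2)
  let F1 : ↥S1 → Fin (n - 2) := fun s =>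
    ⟨(q1 s.1 s.2).2.length - 3, by
      have := h4 s.1 s.2; have := h5 s.1 s.2; omega⟩
  let F2 : ↥S2 → Fin (n - 2) := fun s =>
    ⟨(q2 s.1 (hS2sub s.2)).2.length - 3, by
      have hh := h8 s.1 (hS2sub s.2) s.2
      have := hh.2.1; have := hh.2.2.1; omega⟩
  have hFinj : Function.Injective (Sum.elim F1 F2) := by
    rintro (⟨x1, hx1⟩ | ⟨x1, hx1⟩) (⟨x2, hx2⟩ | ⟨x2, hx2⟩) hEq
    · have hv := congrArg Fin.val hEq
      simp only [Sum.elim_inl, F1] at hv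
      have hl : (q1 x1 hx1).2.length = (q1 x2 hx2).2.length := by
        have := h4 x1 hx1; have := h4 x2 hx2; omega
      have hset := hnr _ _ (q1 x1 hx1).2 (q1 x2 hx2).2 (h3 x1 hx1) (h3 x2 hx2) hl
      have hch : ({ee x1 hx1, ff x1 hx1} : Set (Sym2 (Fin n))) = {ee x2 hx2, ff x2 hx2} := by
        rw [← h6 x1 hx1, ← h6 x2 hx2, hset]
      have hxx : x1 = x2 := (h1 x1 hx1).trans
        ((Scratch.pair_from_set (h2 x1 hx1) hch).trans (h1 x2 hx2).symm)
      cases hxx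
      rfl
    · exfalso
      have hh := h8 x2 (hS2sub hx2) hx2
      have hv := congrArg Fin.val hEq
      simp only [Sum.elim_inl, Sum.elim_inr, F1, F2] at hv
      have hl : (q1 x1 hx1).2.length = (q2 x2 (hS2sub hx2)).2.length := by
        have := h4 x1 hx1; have := hh.2.1; omega
      have hset := hnr _ _ (q1 x1 hx1).2 (q2 x2 (hS2sub hx2)).2 (h3 x1 hx1) hh.1 hl
      have hch : ({ee x1 hx1, ff x1 hx1} : Set (Sym2 (Fin n))) =
          {ee x2 (hS2sub hx2), ff x2 (hS2sub hx2)} := by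
        rw [← h6 x1 hx1, ← hh.2.2.2.1, hset]
      have hxx : x1 = x2 := (h1 x1 hx1).trans
        ((Scratch.pair_from_set (h2 x1 hx1) hch).trans (h1 x2 (hS2sub hx2)).symm)
      subst hxx
      exact h7 x1 hx1 ((Set.ext_iff.1 hset _).2 hh.2.2.2.2)
    · exfalso
      have hh := h8 x1 (hS2sub hx1) hx1
      have hv := congrArg Fin.val hEq
      simp only [Sum.elim_inl, Sum.elim_inr, F1, F2] at hv
      have hl : (q1 x2 hx2).2.length = (q2 x1 (hS2sub hx1)).2.length := by
        have := h4 x2 hx2; have := hh.2.1; omega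
      have hset := hnr _ _ (q1 x2 hx2).2 (q2 x1 (hS2sub hx1)).2 (h3 x2 hx2) hh.1 hl
      have hch : ({ee x2 hx2, ff x2 hx2} : Set (Sym2 (Fin n))) =
          {ee x1 (hS2sub hx1), ff x1 (hS2sub hx1)} := by
        rw [← h6 x2 hx2, ← hh.2.2.2.1, hset]
      have hxx : x1 = x2 := ((h1 x2 hx2).trans
        ((Scratch.pair_from_set (h2 x2 hx2) hch).trans (h1 x1 (hS2sub hx1)).symm)).symm
      subst hxx
      exact h7 x1 hx2 ((Set.ext_iff.1 hset _).2 hh.2.2.2.2)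
    · have hh1 := h8 x1 (hS2sub hx1) hx1
      have hh2 := h8 x2 (hS2sub hx2) hx2
      have hv := congrArg Fin.val hEq
      simp only [Sum.elim_inr, F2] at hv
      have hl : (q2 x1 (hS2sub hx1)).2.length = (q2 x2 (hS2sub hx2)).2.length := by
        have := hh1.2.1; have := hh2.2.1; omega
      have hset := hnr _ _ (q2 x1 (hS2sub hx1)).2 (q2 x2 (hS2sub hx2)).2 hh1.1 hh2.1 hl
      have hch : ({ee x1 (hS2sub hx1), ff x1 (hS2sub hx1)} : Set (Sym2 (Fin n))) =
          {ee x2 (hS2sub hx2), ff x2 (hS2sub hx2)} := by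
        rw [← hh1.2.2.2.1, ← hh2.2.2.2.1, hset]
      have hxx : x1 = x2 := (h1 x1 (hS2sub hx1)).trans
        ((Scratch.pair_from_set (h2 x1 (hS2sub hx1)) hch).trans (h1 x2 (hS2sub hx2)).symm)
      cases hxx
      rfl
  have hcard1 : S1.ncard + S2.ncard ≤ n - 2 := by
    have h := Nat.card_le_card_of_injective _ hFinj
    rwa [Nat.card_sum, Nat.card_coe_set_eq, Nat.card_coe_set_eq,
      Nat.card_eq_fintype_card, Fintype.card_fin] at h
  -- lower bound on S1
  have hKfin : K.Finite := Set.toFinite K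
  have hS1fin : S1.Finite := Set.toFinite S1
  have hKFcard : hKfin.toFinset.card = k := by
    rw [← Set.ncard_eq_toFinset_card K hKfin, hk]
  have hS1Fcard : hS1fin.toFinset.card = S1.ncard := by
    rw [← Set.ncard_eq_toFinset_card S1 hS1fin]
  have hS1low : k.choose 2 ≤ S1.ncard := by
    set z0 : Sym2 (Fin n) := s((⟨0, hn0⟩ : Fin n), (⟨0, hn0⟩ : Fin n)) with hz0
    set fT : Finset (Sym2 (Fin n)) → Sym2 (Sym2 (Fin n)) :=
      fun T => s(T.toList.getD 0 z0, T.toList.getD 1 z0) with hfT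
    have hmain2 : (hKfin.toFinset.powersetCard 2).card ≤ hS1fin.toFinset.card := by
      apply Finset.card_le_card_of_injOn fT
      · intro T hT
        rw [Finset.mem_coe, Finset.mem_powersetCard] at hT
        obtain ⟨hTsub, hT2⟩ := hT
        have hlen : T.toList.length = 2 := by rw [Finset.length_toList]; exact hT2
        obtain ⟨u, v, hl⟩ := List.length_eq_two.1 hlen
        have hfTv : fT T = s(u, v) := by
          show s(T.toList.getD 0 z0, T.toList.getD 1 z0) = s(u, v)
          rw [hl]; rfl
        have hu : u ∈ T := by rw [← Finset.mem_toList, hl]; simp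
        have hv : v ∈ T := by rw [← Finset.mem_toList, hl]; simp
        have huv : u ≠ v := by
          have := T.nodup_toList
          rw [hl] at this
          simp at this
          exact this
        rw [Finset.mem_coe, Set.Finite.mem_toFinset]
        exact ⟨u, v, hfTv, hKfin.mem_toFinset.1 (hTsub hu), hKfin.mem_toFinset.1 (hTsub hv), huv⟩
      · intro T1 hT1 T2 hT2 hfeq
        rw [Finset.mem_coe, Finset.mem_powersetCard] at hT1 hT2
        have hlen1 : T1.toList.length = 2 := by rw [Finset.length_toList]; exact hT1.2
        have hlen2 : T2.toList.length = 2 := by rw [Finset.length_toList]; exact hT2.2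
        obtain ⟨u1, v1, hl1⟩ := List.length_eq_two.1 hlen1
        obtain ⟨u2, v2, hl2⟩ := List.length_eq_two.1 hlen2
        have e1 : fT T1 = s(u1, v1) := by
          show s(T1.toList.getD 0 z0, T1.toList.getD 1 z0) = s(u1, v1)
          rw [hl1]; rfl
        have e2 : fT T2 = s(u2, v2) := by
          show s(T2.toList.getD 0 z0, T2.toList.getD 1 z0) = s(u2, v2)
          rw [hl2]; rfl
        have heq : s(u1, v1) = s(u2, v2) := by rw [← e1, ← e2, hfeq]
        apply Finset.ext
        intro z
        rw [← Finset.mem_toList, ← Finset.mem_toList, hl1, hl2]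
        rcases Sym2.eq_iff.1 heq with ⟨r1, r2⟩ | ⟨r1, r2⟩ <;> subst r1 <;> subst r2 <;> simp <;>
          tauto
    rw [Finset.card_powersetCard, hKFcard, hS1Fcard] at hmain2
    exact hmain2
  omega
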